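/- arXiv:0911.0264 — 4 statements merged into one kernel-verified Lean document; each statement's English description precedes it below -/
import Mathlib

section
/- Let R be an associative ℚ-algebra and let a, c ∈ R. Set b = ca − ac, and assume that b commutes with both a and c. Then for all n₁, n₂ ∈ ℕ, b^{n₂} a^{n₁} = (n₁!/(n₁+n₂)!) · Σ_{j=0}^{n₂} (−1)^j · C(n₂, j) · c^{n₂−j} a^{n₁+n₂} c^j. -/
open LinearMap Finset

noncomputable def Dc {R : Type*} [Ring R] [Algebra ℚ R] (c : R) : Module.End ℚ R :=
  mulLeft ℚ c - mulRight ℚ c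

lemma Dc_apply {R : Type*} [Ring R] [Algebra ℚ R] (c x : R) : Dc c x = c * x - x * c := by
  simp [Dc]

lemma Dc_pow_apply {R : Type*} [Ring R] [Algebra ℚ R] (c x : R) (n : ℕ) :
    ((Dc c) ^ n) x = ∑ j ∈ range (n + 1),
      ((-1 : ℚ) ^ j * (n.choose j : ℚ)) • (c ^ (n - j) * x * c ^ j) := by
  have hc : Commute (mulLeft ℚ c) (-(mulRight ℚ c)) :=
    (LinearMap.commute_mulLeft_right (R := ℚ) c c).neg_right
  have hD : Dc c = mulLeft ℚ c + -(mulRight ℚ c) := by simp [Dc, sub_eq_add_neg]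
  rw [hD, hc.add_pow n, ← Finset.sum_range_reflect, LinearMap.sum_apply]
  apply Finset.sum_congr rfl
  intro j hj
  have hjle : j ≤ n := Nat.lt_succ_iff.mp (Finset.mem_range.mp hj)
  have h1 : n - (n - j) = j := Nat.sub_sub_self hjle
  have h2 : n.choose (n - j) = n.choose j := Nat.choose_symm hjle
  simp only [Nat.add_sub_cancel]
  rw [h1, h2]
  have h3 : (-(mulRight ℚ c)) ^ j = ((-1 : ℚ) ^ j) • (mulRight ℚ (c ^ j)) := by
    rw [← pow_mulRight]
    rw [show -(mulRight ℚ c) = (-1 : ℚ) • mulRight ℚ c by module]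
    rw [smul_pow]
  rw [h3]
  rw [pow_mulLeft]
  simp only [Module.End.mul_apply, LinearMap.smul_apply, mulLeft_apply, mulRight_apply, Module.End.natCast_apply]
  rw [← Nat.cast_smul_eq_nsmul ℚ]
  simp only [smul_mul_assoc, mul_smul_comm, smul_smul, mul_assoc]

lemma comm_pow {R : Type*} [Ring R] [Algebra ℚ R] (a c : R)
    (hba : (c * a - a * c) * a = a * (c * a - a * c)) (k : ℕ) :
    c * a ^ (k + 1) - a ^ (k + 1) * c = ((k : ℚ) + 1) • (a ^ k * (c * a - a * c)) := by
  induction k with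
  | zero => simp
  | succ k ih =>
    have expand : c * a ^ (k + 2) - a ^ (k + 2) * c =
        (c * a ^ (k + 1) - a ^ (k + 1) * c) * a + a ^ (k + 1) * (c * a - a * c) := by
      simp only [pow_succ]
      noncomm_ring
    rw [expand, ih, smul_mul_assoc, mul_assoc, hba, ← mul_assoc, ← pow_succ]
    push_cast
    module

lemma Dc_pow_a {R : Type*} [Ring R] [Algebra ℚ R] (a c : R)
    (hba : (c * a - a * c) * a = a * (c * a - a * c))
    (hbc : (c * a - a * c) * c = c * (c * a - a * c)) :
    ∀ m n : ℕ, m ≤ n → ((Dc c) ^ m) (a ^ n) =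
      (n.descFactorial m : ℚ) • (a ^ (n - m) * (c * a - a * c) ^ m) := by
  intro m
  induction m with
  | zero => intro n _; simp
  | succ m ih =>
    intro n hmn
    have hm : m ≤ n := le_of_lt (Nat.lt_of_succ_le hmn)
    rw [pow_succ', Module.End.mul_apply, ih n hm, map_smul]
    have hbcomm : Commute (c * a - a * c) c := hbc
    have hDb : Dc c (a ^ (n - m) * (c * a - a * c) ^ m) =
        Dc c (a ^ (n - m)) * (c * a - a * c) ^ m := by
      rw [Dc_apply, Dc_apply, sub_mul, mul_assoc, mul_assoc,
        (hbcomm.pow_left m).eq]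
      noncomm_ring
    rw [hDb]
    obtain ⟨k, hk⟩ : ∃ k, n - m = k + 1 :=
      ⟨n - m - 1, by omega⟩
    rw [hk, Dc_apply, comm_pow a c hba k]
    have hk2 : n - (m + 1) = k := by omega
    rw [smul_mul_assoc, mul_assoc, ← pow_succ', smul_smul, hk2, Nat.descFactorial_succ, hk]
    congr 1
    push_cast
    ring

/-- with `b = ca - ac` commuting with `a` and `c`, one has
`b^{n₂} a^{n¹} = (n₁!/(n₁+n₂)!) Σ_{j=0}^{n₂} (-1)^j C(n₂,j) c^{n₂-j} a^{n₁+n₂} c^j`. -/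
theorem stmt_1 (R : Type*) [Ring R] [Algebra ℚ R] (a c : R)
    (hba : (c * a - a * c) * a = a * (c * a - a * c))
    (hbc : (c * a - a * c) * c = c * (c * a - a * c)) (n₁ n₂ : ℕ) :
    (c * a - a * c) ^ n₂ * a ^ n₁ =
      ((n₁.factorial : ℚ) / ((n₁ + n₂).factorial : ℚ)) •
        ∑ j ∈ Finset.range (n₂ + 1),
          ((-1 : ℚ) ^ j * (n₂.choose j : ℚ)) • (c ^ (n₂ - j) * a ^ (n₁ + n₂) * c ^ j) := by
  have hle : n₂ ≤ n₁ + n₂ := Nat.le_add_left _ _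
  have hsub : n₁ + n₂ - n₂ = n₁ := by omega
  have hkey := Dc_pow_a a c hba hbc n₂ (n₁ + n₂) hle
  rw [hsub] at hkey
  rw [← Dc_pow_apply, hkey, smul_smul]
  have hfac : (n₁.factorial : ℚ) * ((n₁ + n₂).descFactorial n₂ : ℚ) =
      ((n₁ + n₂).factorial : ℚ) := by
    rw [← Nat.cast_mul]
    congr 1
    have := Nat.factorial_mul_descFactorial (n := n₁ + n₂) (k := n₂) hle
    rw [hsub] at this
    exact this
  have hne : ((n₁ + n₂).factorial : ℚ) ≠ 0 := Nat.cast_ne_zero.mpr (Nat.factorial_ne_zero _)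
  rw [div_mul_eq_mul_div, hfac, div_self hne, one_smul]
  exact (Commute.pow_pow hba n₂ n₁).eq
end

section
/- In the ring of formal power series ℚ[[A, Z]], one has: (1 − A)⁻¹ (1 − AZ)⁻¹ (1 − AZ²)⁻¹ = Σ_{n₁=0}^{∞} Σ_{n₂=0}^{∞} Σ_{n₃=0}^{2n₁} A^{n₁} · (AZ)^{2n₂} · Z^{n₃}. -/
open MvPowerSeries Finsupp

private def cnt (a z : ℕ) : ℕ :=
  ((Finset.range (a + 1) ×ˢ Finset.range (a + 1) ×ˢ Finset.range (z + 1)).filter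
      (fun t => t.1 + 2 * t.2.1 = a ∧ 2 * t.2.1 + t.2.2 = z ∧ t.2.2 ≤ 2 * t.1)).card

private lemma cnt_eq (a z : ℕ) : cnt a z = min a z + 1 - (z + 1) / 2 := by
  have h : ((Finset.range (a + 1) ×ˢ Finset.range (a + 1) ×ˢ Finset.range (z + 1)).filter
      (fun t => t.1 + 2 * t.2.1 = a ∧ 2 * t.2.1 + t.2.2 = z ∧ t.2.2 ≤ 2 * t.1))
      = (Finset.range (min a z + 1 - (z + 1) / 2)).image
          (fun i => (a - 2 * i, i, z - 2 * i)) := by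
    ext ⟨n1, n2, n3⟩
    simp only [Finset.mem_filter, Finset.mem_product, Finset.mem_range, Finset.mem_image,
      Prod.mk.injEq]
    constructor
    · rintro ⟨⟨h1, h2, h3⟩, h4, h5, h6⟩
      exact ⟨n2, by omega, by omega, rfl, by omega⟩
    · rintro ⟨i, hi, h1, rfl, h3⟩
      omega
  rw [cnt, h, Finset.card_image_of_injective _ ?_, Finset.card_range]
  intro i j hij
  simpa using congrArg (fun t => t.2.1) hij

private noncomputable def Pfun : MvPowerSeries (Fin 2) ℚ :=
  fun d => (cnt (d 0) (d 1) : ℚ)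

private lemma coeff_Pfun (e : Fin 2 →₀ ℕ) :
    MvPowerSeries.coeff e Pfun = (cnt (e 0) (e 1) : ℚ) := rfl

private lemma L1 (c : Prop) [Decidable c] (x y : ℚ) :
    (if c then x - y else 0) = (if c then x else 0) - (if c then y else 0) := by
  split_ifs <;> simp

private lemma L2 (c c' : Prop) [Decidable c] [Decidable c'] (y : ℚ) :
    (if c then (if c' then y else 0) else 0) = if c ∧ c' then y else 0 := by
  split_ifs with h1 h2 <;> simp_all

private lemma coeff_mul_one_sub_monomial (φ : MvPowerSeries (Fin 2) ℚ) (m d : Fin 2 →₀ ℕ) :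
    MvPowerSeries.coeff d (φ * (1 - MvPowerSeries.monomial m 1)) =
      MvPowerSeries.coeff d φ -
        if m ≤ d then MvPowerSeries.coeff (d - m) φ else 0 := by
  rw [mul_sub, mul_one, map_sub, MvPowerSeries.coeff_mul_monomial]
  split_ifs <;> simp

set_option maxHeartbeats 2000000 in
private lemma key (a z : ℕ) :
    cnt a z
      + (if (1 ≤ a ∧ 1 ≤ z) ∧ 1 ≤ a - 1 ∧ 2 ≤ z - 1 then cnt (a - 1 - 1) (z - 1 - 2) else 0)
      + (if 1 ≤ a ∧ 1 ≤ a - 1 ∧ 2 ≤ z then cnt (a - 1 - 1) (z - 2) else 0)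
      + (if 1 ≤ a ∧ 1 ≤ a - 1 ∧ 1 ≤ z then cnt (a - 1 - 1) (z - 1) else 0)
    = (if a = 0 ∧ z = 0 then 1 else 0)
      + (if 1 ≤ a ∧ 2 ≤ z then cnt (a - 1) (z - 2) else 0)
      + (if 1 ≤ a ∧ 1 ≤ z then cnt (a - 1) (z - 1) else 0)
      + (if 1 ≤ a then cnt (a - 1) z else 0)
      + (if 1 ≤ a ∧ (1 ≤ a - 1 ∧ 1 ≤ z) ∧ 1 ≤ a - 1 - 1 ∧ 2 ≤ z - 1 then
          cnt (a - 1 - 1 - 1) (z - 1 - 2) else 0) := by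
  simp only [cnt_eq]
  rcases a with _|_|_|a <;> rcases z with _|_|_|z <;>
    simp [Nat.succ_le_succ, Nat.le_add_left] <;> omega

/-- `(1-A)⁻¹(1-AZ)⁻¹(1-AZ²)⁻¹ = Σ_{n₁,n₂≥0} Σ_{n₃=0}^{2n₁} A^{n₁}(AZ)^{2n₂}Z^{n₃}`
in `ℚ[[A, Z]]`, where `A = X 0` and `Z = X 1`; the coefficient of `A^a Z^z` on the right is
the number of triples `(n₁,n₂,n₃)` with `n₁+2n₂ = a`, `2n₂+n₃ = z`, `n₃ ≤ 2n₁`. -/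
theorem stmt_8 :
    ((1 - MvPowerSeries.X 0)⁻¹ * (1 - MvPowerSeries.X 0 * MvPowerSeries.X 1)⁻¹ *
        (1 - MvPowerSeries.X 0 * (MvPowerSeries.X 1) ^ 2)⁻¹ : MvPowerSeries (Fin 2) ℚ) =
      (fun d : Fin 2 →₀ ℕ =>
        (((Finset.range (d 0 + 1) ×ˢ Finset.range (d 0 + 1) ×ˢ Finset.range (d 1 + 1)).filter
            (fun t => t.1 + 2 * t.2.1 = d 0 ∧ 2 * t.2.1 + t.2.2 = d 1 ∧ t.2.2 ≤ 2 * t.1)).card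
          : ℚ)) := by
  show _ = Pfun
  rw [← MvPowerSeries.mul_inv_rev, ← MvPowerSeries.mul_inv_rev]
  rw [MvPowerSeries.inv_eq_iff_mul_eq_one (by simp)]
  have hB : (X 0 * X 1 : MvPowerSeries (Fin 2) ℚ)
      = monomial (single 0 1 + single 1 1) 1 := by
    rw [X_def, X_def, monomial_mul_monomial, mul_one]
  have hC : (X 0 * X 1 ^ 2 : MvPowerSeries (Fin 2) ℚ)
      = monomial (single 0 1 + single 1 2) 1 := by
    rw [X_def, X_pow_eq, monomial_mul_monomial, mul_one]
  rw [hC, hB, X_def 0]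
  rw [show (Pfun * ((1 - monomial (single 0 1 + single 1 2) 1) *
      ((1 - monomial (single 0 1 + single 1 1) 1) * (1 - monomial (single 0 1) 1)))) =
      ((Pfun * (1 - monomial (single 0 1 + single 1 2) 1)) *
        (1 - monomial (single 0 1 + single 1 1) 1)) * (1 - monomial (single 0 1) 1)
    from by ring]
  ext d
  simp only [coeff_mul_one_sub_monomial, coeff_Pfun, MvPowerSeries.coeff_one]
  simp only [Finsupp.le_def, Fin.forall_fin_two, Finsupp.add_apply, Finsupp.single_apply,
    Finsupp.tsub_apply, Finsupp.coe_tsub, Pi.sub_apply]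
  norm_num
  have hd : (d = 0) ↔ (d 0 = 0 ∧ d 1 = 0) := by
    simp [Finsupp.ext_iff, Fin.forall_fin_two]
  rw [if_congr hd rfl rfl]
  simp only [L1, L2]
  generalize d 0 = a
  generalize d 1 = z
  have H := key a z
  have Hq : (↑(cnt a z)
      + (if (1 ≤ a ∧ 1 ≤ z) ∧ 1 ≤ a - 1 ∧ 2 ≤ z - 1 then (cnt (a - 1 - 1) (z - 1 - 2) : ℚ) else 0)
      + (if 1 ≤ a ∧ 1 ≤ a - 1 ∧ 2 ≤ z then (cnt (a - 1 - 1) (z - 2) : ℚ) else 0)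
      + (if 1 ≤ a ∧ 1 ≤ a - 1 ∧ 1 ≤ z then (cnt (a - 1 - 1) (z - 1) : ℚ) else 0)
    = (if a = 0 ∧ z = 0 then (1 : ℚ) else 0)
      + (if 1 ≤ a ∧ 2 ≤ z then (cnt (a - 1) (z - 2) : ℚ) else 0)
      + (if 1 ≤ a ∧ 1 ≤ z then (cnt (a - 1) (z - 1) : ℚ) else 0)
      + (if 1 ≤ a then (cnt (a - 1) z : ℚ) else 0)
      + (if 1 ≤ a ∧ (1 ≤ a - 1 ∧ 1 ≤ z) ∧ 1 ≤ a - 1 - 1 ∧ 2 ≤ z - 1 then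
          (cnt (a - 1 - 1 - 1) (z - 1 - 2) : ℚ) else 0)) := by
    exact_mod_cast congrArg (Nat.cast : ℕ → ℚ) H
  linarith [Hq]
end

section
/- Let i ≥ 3, let μ₂, …, μ_{i−1} be nonnegative integers, and let μ_i be a real number. Let n₁, …, n_{i−1} be natural numbers satisfying n_{i+1−k} ≤ μ_k for 2 ≤ k ≤ i−1, and define the 'norm' P = ∏_{j=1}^{i−1} [ n_j! · ∏_{k_j=0}^{n_j−1} ( Σ_{l=i+1−j}^{i} μ_l − Σ_{l=i+2−j}^{i} n_{i+1−l} − k_j ) ]. If μ_i ∉ ℤ, μ_i > −1, and Σ_{j=1}^{i−1} n_j ≤ ⌊μ_i⌋ + 2, then P < 0 if and only if n₁ = ⌊μ_i⌋ + 2 and n_j = 0 for all j ≥ 2; otherwise P > 0. -/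
/-- Lemma B6: for `μ_i ∉ ℤ`, `μ_i > -1` and depth `Σ n_j ≤ ⌊μ_i⌋ + 2`,
the norm `P` is negative iff `n₁ = ⌊μ_i⌋ + 2` and all other `n_j` vanish; otherwise `P > 0`.
Here `M l` encodes `μ_l` (a nonnegative integer for `2 ≤ l ≤ i-1`, real for `l = i`). -/
theorem stmt_14 (i : ℕ) (hi : 3 ≤ i) (M : ℕ → ℝ)
    (hMint : ∀ l, 2 ≤ l → l ≤ i - 1 → ∃ m : ℕ, M l = m)
    (hMi1 : -1 < M i) (hMi2 : ∀ m : ℤ, (m : ℝ) ≠ M i)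
    (n : ℕ → ℕ)
    (hn : ∀ k, 2 ≤ k → k ≤ i - 1 → (n (i + 1 - k) : ℝ) ≤ M k)
    (hsum : (∑ j ∈ Finset.Icc 1 (i - 1), (n j : ℤ)) ≤ ⌊M i⌋ + 2) :
    let P : ℝ := ∏ j ∈ Finset.Icc 1 (i - 1),
      ((n j).factorial : ℝ) * ∏ k ∈ Finset.range (n j),
        ((∑ l ∈ Finset.Icc (i + 1 - j) i, M l) -
          (∑ l ∈ Finset.Icc (i + 2 - j) i, (n (i + 1 - l) : ℝ)) - k)
    (P < 0 ↔ ((n 1 : ℤ) = ⌊M i⌋ + 2 ∧ ∀ j, 2 ≤ j → j ≤ i - 1 → n j = 0)) ∧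
      (¬((n 1 : ℤ) = ⌊M i⌋ + 2 ∧ ∀ j, 2 ≤ j → j ≤ i - 1 → n j = 0) → 0 < P) := by
  intro P
  have hP : P = ∏ j ∈ Finset.Icc 1 (i - 1),
      ((n j).factorial : ℝ) * ∏ k ∈ Finset.range (n j),
        ((∑ l ∈ Finset.Icc (i + 1 - j) i, M l) -
          (∑ l ∈ Finset.Icc (i + 2 - j) i, (n (i + 1 - l) : ℝ)) - k) := rfl
  set f : ℤ := ⌊M i⌋ with hf
  have hflt : (f : ℝ) < M i := lt_of_le_of_ne (Int.floor_le _) (hMi2 f)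
  have hlt1 : M i < (f : ℝ) + 1 := by
    have := Int.lt_floor_add_one (M i); push_cast at this ⊢; linarith
  have hfm1 : -1 ≤ f := by
    have h2 : (-2 : ℝ) < (f : ℝ) := by linarith
    have : (-2 : ℤ) < f := by exact_mod_cast h2
    omega
  have h1mem : (1 : ℕ) ∈ Finset.Icc 1 (i - 1) := Finset.mem_Icc.mpr ⟨le_refl 1, by omega⟩
  have hn1le : (n 1 : ℤ) ≤ f + 2 := by
    calc (n 1 : ℤ) ≤ ∑ j ∈ Finset.Icc 1 (i - 1), (n j : ℤ) :=
          Finset.single_le_sum (f := fun j => (n j : ℤ)) (fun j _ => by positivity) h1mem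
      _ ≤ f + 2 := hsum
  -- simplification of the j = 1 term
  have hj1 : ∀ k : ℕ, ((∑ l ∈ Finset.Icc (i + 1 - 1) i, M l) -
      (∑ l ∈ Finset.Icc (i + 2 - 1) i, (n (i + 1 - l) : ℝ)) - k) = M i - k := by
    intro k
    rw [show i + 1 - 1 = i from by omega, Finset.Icc_self, Finset.sum_singleton,
      show Finset.Icc (i + 2 - 1) i = ∅ from Finset.Icc_eq_empty (by omega), Finset.sum_empty]
    ring
  -- key lower bound for j ≥ 2 factors
  have hdec : ∀ j, 2 ≤ j → j ≤ i - 1 →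
      M i + (n j : ℝ) - (n 1 : ℝ) ≤
      (∑ l ∈ Finset.Icc (i + 1 - j) i, M l) -
        (∑ l ∈ Finset.Icc (i + 2 - j) i, (n (i + 1 - l) : ℝ)) := by
    intro j hj2 hji
    set A := ∑ l ∈ Finset.Icc (i + 2 - j) (i - 1), (n (i + 1 - l) : ℝ) with hA
    have hsplit1 : ∑ l ∈ Finset.Icc (i + 1 - j) i, M l
        = M i + ∑ l ∈ Finset.Icc (i + 1 - j) (i - 1), M l := by
      rw [show Finset.Icc (i + 1 - j) i = Finset.Ico (i + 1 - j) (i - 1 + 1 + 1) from by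
            rw [Finset.Ico_add_one_right_eq_Icc]; congr 1; omega,
        Finset.sum_Ico_succ_top (by omega), Finset.Ico_add_one_right_eq_Icc,
        show i - 1 + 1 = i from by omega]
      ring
    have hsplit2 : ∑ l ∈ Finset.Icc (i + 2 - j) i, (n (i + 1 - l) : ℝ) = A + (n 1 : ℝ) := by
      rw [show Finset.Icc (i + 2 - j) i = Finset.Ico (i + 2 - j) (i - 1 + 1 + 1) from by
            rw [Finset.Ico_add_one_right_eq_Icc]; congr 1; omega,
        Finset.sum_Ico_succ_top (by omega), Finset.Ico_add_one_right_eq_Icc,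
        show i - 1 + 1 = i from by omega, show i + 1 - i = 1 from by omega]
    have hsplit3 : (n j : ℝ) + A ≤ ∑ l ∈ Finset.Icc (i + 1 - j) (i - 1), M l := by
      have h1 : ∑ l ∈ Finset.Icc (i + 1 - j) (i - 1), (n (i + 1 - l) : ℝ)
          ≤ ∑ l ∈ Finset.Icc (i + 1 - j) (i - 1), M l := by
        refine Finset.sum_le_sum (fun l hl => ?_)
        rw [Finset.mem_Icc] at hl
        exact hn l (by omega) hl.2
      have h2 : ∑ l ∈ Finset.Icc (i + 1 - j) (i - 1), (n (i + 1 - l) : ℝ)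
          = (n j : ℝ) + A := by
        rw [show Finset.Icc (i + 1 - j) (i - 1) = Finset.Ico (i + 1 - j) i from by
              rw [← Finset.Ico_add_one_right_eq_Icc]; congr 1; omega,
          Finset.sum_eq_sum_Ico_succ_bot (show i + 1 - j < i from by omega),
          show i + 1 - (i + 1 - j) = j from by omega,
          show Finset.Ico (i + 1 - j + 1) i = Finset.Icc (i + 2 - j) (i - 1) from by
            rw [← Finset.Ico_add_one_right_eq_Icc]; congr 1 <;> omega]
      linarith [h2 ▸ h1]
    linarith
  by_cases hcase : (n 1 : ℤ) = f + 2
  · -- Case A : the unique negative-norm state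
    have hall0 : ∀ b ∈ Finset.Icc 1 (i - 1), b ≠ 1 → n b = 0 := by
      have hadd := Finset.add_sum_erase (Finset.Icc 1 (i - 1)) (fun j => (n j : ℤ)) h1mem
      have hle0 : ∑ j ∈ (Finset.Icc 1 (i - 1)).erase 1, (n j : ℤ) ≤ 0 := by
        omega
      have hz : ∑ j ∈ (Finset.Icc 1 (i - 1)).erase 1, (n j : ℤ) = 0 :=
        le_antisymm hle0 (Finset.sum_nonneg fun j _ => by positivity)
      intro b hb hb1
      have := (Finset.sum_eq_zero_iff_of_nonneg (fun j _ => by positivity)).mp hz b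
        (Finset.mem_erase.mpr ⟨hb1, hb⟩)
      exact_mod_cast this
    have hPeq : P = ((n 1).factorial : ℝ) * ∏ k ∈ Finset.range (n 1),
        ((∑ l ∈ Finset.Icc (i + 1 - 1) i, M l) -
          (∑ l ∈ Finset.Icc (i + 2 - 1) i, (n (i + 1 - l) : ℝ)) - k) := by
      rw [hP]
      refine Finset.prod_eq_single_of_mem 1 h1mem (fun b hb hb1 => ?_)
      rw [hall0 b hb hb1]
      simp
    have hPeq2 : P = ((n 1).factorial : ℝ) * ∏ k ∈ Finset.range (n 1), (M i - k) := by
      rw [hPeq]; congr 1; exact Finset.prod_congr rfl fun k _ => hj1 k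
    have hn1pos : 1 ≤ n 1 := by omega
    set m := n 1 - 1 with hm
    have hmf : (m : ℤ) = f + 1 := by omega
    have hn1m : n 1 = m + 1 := by omega
    have hneg : P < 0 := by
      rw [hPeq2, hn1m, Finset.prod_range_succ]
      have hpos : 0 < ∏ k ∈ Finset.range m, (M i - k) := by
        refine Finset.prod_pos fun k hk => ?_
        rw [Finset.mem_range] at hk
        have hkf : (k : ℤ) ≤ f := by omega
        have : (k : ℝ) ≤ (f : ℝ) := by exact_mod_cast hkf
        linarith
      have hlast : M i - (m : ℝ) < 0 := by
        have : (m : ℝ) = (f : ℝ) + 1 := by exact_mod_cast hmf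
        linarith
      exact mul_neg_of_pos_of_neg (by positivity) (mul_neg_of_pos_of_neg hpos hlast)
    have hcond : (n 1 : ℤ) = f + 2 ∧ ∀ j, 2 ≤ j → j ≤ i - 1 → n j = 0 :=
      ⟨hcase, fun j h2 hle => hall0 j (Finset.mem_Icc.mpr ⟨by omega, hle⟩) (by omega)⟩
    exact ⟨⟨fun _ => hcond, fun _ => hneg⟩, fun hc => absurd hcond hc⟩
  · -- Case B : all factors positive
    have hn1 : (n 1 : ℤ) ≤ f + 1 := by omega
    have hPpos : 0 < P := by
      rw [hP]
      refine Finset.prod_pos fun j hj => ?_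
      rw [Finset.mem_Icc] at hj
      refine mul_pos (by positivity) (Finset.prod_pos fun k hk => ?_)
      rw [Finset.mem_range] at hk
      rcases eq_or_lt_of_le hj.1 with h1 | h2
      · -- j = 1
        subst h1
        rw [hj1 k]
        have hkf : (k : ℤ) ≤ f := by omega
        have : (k : ℝ) ≤ (f : ℝ) := by exact_mod_cast hkf
        linarith
      · -- j ≥ 2
        have hb := hdec j h2 hj.2
        have hkb : (k : ℝ) ≤ (n j : ℝ) - 1 := by
          have : (k : ℝ) + 1 ≤ (n j : ℝ) := by exact_mod_cast hk
          linarith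
        have hn1r : (n 1 : ℝ) ≤ (f : ℝ) + 1 := by exact_mod_cast hn1
        linarith
    refine ⟨⟨fun h => absurd h (not_lt.mpr hPpos.le), fun h => absurd h.1 hcase⟩, fun _ => hPpos⟩
end

section
/- Let i ≥ 3, let μ₂, …, μ_{i−1} be nonnegative integers and μ_i a nonnegative integer. Let n₁, …, n_{i−1} be natural numbers with n_{i+1−k} ≤ μ_k for 2 ≤ k ≤ i−1 and Σ_{j=1}^{i−1} n_j ≤ μ_i + 1, and define P = ∏_{j=1}^{i−1} [ n_j! · ∏_{k_j=0}^{n_j−1} ( Σ_{l=i+1−j}^{i} μ_l − Σ_{l=i+2−j}^{i} n_{i+1−l} − k_j ) ]. Then P = 0 if and only if n₁ = μ_i + 1 and n_j = 0 for all j ≥ 2; otherwise P > 0. -/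
/-- Lemma B7: for nonnegative integer `μ_l` and depth `Σ n_j ≤ μ_i + 1`,
the norm `P` vanishes iff `n₁ = μ_i + 1` and all other `n_j` vanish; otherwise `P > 0`. -/
theorem stmt_15 (i : ℕ) (hi : 3 ≤ i) (μ : ℕ → ℕ) (n : ℕ → ℕ)
    (hn : ∀ k, 2 ≤ k → k ≤ i - 1 → n (i + 1 - k) ≤ μ k)
    (hsum : (∑ j ∈ Finset.Icc 1 (i - 1), n j) ≤ μ i + 1) :
    let P : ℝ := ∏ j ∈ Finset.Icc 1 (i - 1),
      ((n j).factorial : ℝ) * ∏ k ∈ Finset.range (n j),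
        ((∑ l ∈ Finset.Icc (i + 1 - j) i, (μ l : ℝ)) -
          (∑ l ∈ Finset.Icc (i + 2 - j) i, (n (i + 1 - l) : ℝ)) - k)
    (P = 0 ↔ (n 1 = μ i + 1 ∧ ∀ j, 2 ≤ j → j ≤ i - 1 → n j = 0)) ∧
      (¬(n 1 = μ i + 1 ∧ ∀ j, 2 ≤ j → j ≤ i - 1 → n j = 0) → 0 < P) := by
  intro P
  have hP : P = ∏ j ∈ Finset.Icc 1 (i - 1),
      ((n j).factorial : ℝ) * ∏ k ∈ Finset.range (n j),
        ((∑ l ∈ Finset.Icc (i + 1 - j) i, (μ l : ℝ)) -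
          (∑ l ∈ Finset.Icc (i + 2 - j) i, (n (i + 1 - l) : ℝ)) - k) := rfl
  -- reindex the `n` sum
  have hA : ∀ j, 1 ≤ j → j ≤ i - 1 →
      (∑ l ∈ Finset.Icc (i + 2 - j) i, n (i + 1 - l)) = ∑ m ∈ Finset.Icc 1 (j - 1), n m := by
    intro j hj1 hj2
    refine Finset.sum_nbij' (fun l => i + 1 - l) (fun m => i + 1 - m) ?_ ?_ ?_ ?_ ?_
    · intro a ha; simp only [Finset.mem_Icc] at ha ⊢; omega
    · intro a ha; simp only [Finset.mem_Icc] at ha ⊢; omega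
    · intro a ha; simp only [Finset.mem_Icc] at ha; beta_reduce; omega
    · intro a ha; simp only [Finset.mem_Icc] at ha; beta_reduce; omega
    · intro a ha; rfl
  -- the `μ` sum dominates `μ i + ∑_{m=2}^{j} n m`
  have hB : ∀ j, 1 ≤ j → j ≤ i - 1 →
      μ i + (∑ m ∈ Finset.Icc 2 j, n m) ≤ ∑ l ∈ Finset.Icc (i + 1 - j) i, μ l := by
    intro j hj1 hj2
    have hsplit : Finset.Icc (i + 1 - j) i = insert i (Finset.Icc (i + 1 - j) (i - 1)) := by
      ext x; simp only [Finset.mem_insert, Finset.mem_Icc]; omega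
    rw [hsplit, Finset.sum_insert (by simp only [Finset.mem_Icc]; omega)]
    have h1 : (∑ m ∈ Finset.Icc 2 j, n m) = ∑ l ∈ Finset.Icc (i + 1 - j) (i - 1), n (i + 1 - l) := by
      refine (Finset.sum_nbij' (fun l => i + 1 - l) (fun m => i + 1 - m) ?_ ?_ ?_ ?_ ?_).symm
      · intro a ha; simp only [Finset.mem_Icc] at ha ⊢; omega
      · intro a ha; simp only [Finset.mem_Icc] at ha ⊢; omega
      · intro a ha; simp only [Finset.mem_Icc] at ha; beta_reduce; omega
      · intro a ha; simp only [Finset.mem_Icc] at ha; beta_reduce; omega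
      · intro a ha; rfl
    have h2 : ∑ l ∈ Finset.Icc (i + 1 - j) (i - 1), n (i + 1 - l)
        ≤ ∑ l ∈ Finset.Icc (i + 1 - j) (i - 1), μ l := by
      apply Finset.sum_le_sum
      intro l hl
      simp only [Finset.mem_Icc] at hl
      exact hn l (by omega) (by omega)
    omega
  have hn1 : n 1 ≤ ∑ j ∈ Finset.Icc 1 (i - 1), n j :=
    Finset.single_le_sum (f := n) (fun _ _ => Nat.zero_le _)
      (by simp only [Finset.mem_Icc]; omega)
  have hsum1j : ∀ j, 1 ≤ j → j ≤ i - 1 →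
      (∑ m ∈ Finset.Icc 1 (j - 1), n m) + n j = n 1 + ∑ m ∈ Finset.Icc 2 j, n m := by
    intro j hj1 hj2
    have e1 : Finset.Icc 1 j = insert 1 (Finset.Icc 2 j) := by
      ext x; simp only [Finset.mem_insert, Finset.mem_Icc]; omega
    have e2 : Finset.Icc 1 j = insert j (Finset.Icc 1 (j - 1)) := by
      ext x; simp only [Finset.mem_insert, Finset.mem_Icc]; omega
    have v1 : ∑ m ∈ Finset.Icc 1 j, n m = n 1 + ∑ m ∈ Finset.Icc 2 j, n m := by
      rw [e1, Finset.sum_insert (by simp only [Finset.mem_Icc]; omega)]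
    have v2 : ∑ m ∈ Finset.Icc 1 j, n m = n j + ∑ m ∈ Finset.Icc 1 (j - 1), n m := by
      rw [e2, Finset.sum_insert (by simp only [Finset.mem_Icc]; omega)]
    omega
  -- each inner factor is nonnegative
  have key0 : ∀ j, 1 ≤ j → j ≤ i - 1 → ∀ k, k < n j →
      (∑ l ∈ Finset.Icc (i + 2 - j) i, n (i + 1 - l)) + k ≤ ∑ l ∈ Finset.Icc (i + 1 - j) i, μ l := by
    intro j hj1 hj2 k hk
    have := hA j hj1 hj2
    have := hB j hj1 hj2
    have := hsum1j j hj1 hj2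
    omega
  -- in the non-exceptional case, each inner factor is at least 1
  have key1 : ¬(n 1 = μ i + 1 ∧ ∀ j, 2 ≤ j → j ≤ i - 1 → n j = 0) →
      ∀ j, 1 ≤ j → j ≤ i - 1 → ∀ k, k < n j →
      (∑ l ∈ Finset.Icc (i + 2 - j) i, n (i + 1 - l)) + k + 1 ≤ ∑ l ∈ Finset.Icc (i + 1 - j) i, μ l := by
    intro hne j hj1 hj2 k hk
    by_contra hcon
    apply hne
    have e1 := hA j hj1 hj2
    have e2 := hB j hj1 hj2
    have e3 := hsum1j j hj1 hj2
    have hn1eq : n 1 = μ i + 1 := by omega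
    have htail : ∑ m ∈ Finset.Icc 2 (i - 1), n m = 0 := by
      have e4 : Finset.Icc 1 (i - 1) = insert 1 (Finset.Icc 2 (i - 1)) := by
        ext x; simp only [Finset.mem_insert, Finset.mem_Icc]; omega
      have v : ∑ m ∈ Finset.Icc 1 (i - 1), n m
          = n 1 + ∑ m ∈ Finset.Icc 2 (i - 1), n m := by
        rw [e4, Finset.sum_insert (by simp only [Finset.mem_Icc]; omega)]
      omega
    refine ⟨hn1eq, fun m hm1 hm2 => ?_⟩
    have := (Finset.sum_eq_zero_iff.mp htail) m (by simp only [Finset.mem_Icc]; omega)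
    exact this
  -- each real factor in the non-exceptional case is positive
  have hpos : ¬(n 1 = μ i + 1 ∧ ∀ j, 2 ≤ j → j ≤ i - 1 → n j = 0) → 0 < P := by
    intro hne
    rw [hP]
    apply Finset.prod_pos
    intro j hj
    simp only [Finset.mem_Icc] at hj
    apply mul_pos (by positivity)
    apply Finset.prod_pos
    intro k hk
    simp only [Finset.mem_range] at hk
    have h := key1 hne j hj.1 hj.2 k hk
    have hcast : ((∑ l ∈ Finset.Icc (i + 2 - j) i, n (i + 1 - l)) + k + 1 : ℝ)
        ≤ ((∑ l ∈ Finset.Icc (i + 1 - j) i, μ l : ℕ) : ℝ) := by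
      exact_mod_cast Nat.cast_le.mpr h
    push_cast at hcast
    linarith
  refine ⟨⟨fun hP0 => ?_, fun hex => ?_⟩, hpos⟩
  · by_contra hne
    exact absurd hP0 (ne_of_gt (hpos hne))
  · -- exceptional case: the j = 1 factor vanishes
    rw [hP]
    apply Finset.prod_eq_zero (i := 1) (by simp only [Finset.mem_Icc]; omega)
    apply mul_eq_zero_of_right
    apply Finset.prod_eq_zero (i := μ i) (by simp only [Finset.mem_range]; omega)
    have e1 : Finset.Icc (i + 1 - 1) i = {i} := by
      ext x; simp only [Finset.mem_Icc, Finset.mem_singleton]; omega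
    have e2 : Finset.Icc (i + 2 - 1) i = (∅ : Finset ℕ) := by
      ext x; simp only [Finset.mem_Icc, Finset.notMem_empty, iff_false]; omega
    rw [e1, e2]
    simp
end
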